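/- Let (E,‖·‖) be a complex Banach space, R > 0, k > 0 and d a direction. Let f̂ = Σ_n f_{n*}(x₂) x₁ⁿ be a formal power series in x₁ with coefficients f_{n*} holomorphic and bounded on the disk D_R, which is k-summable in x₁ in direction d with k-sum f. Then: (a) f̂∘π₁ ∈ E[[x₁,x₂]] is k-summable in the monomial x₁x₂ in direction d with k-sum f∘π₁; and (b) f̂∘π₂ is k-summable in x₁ (as a series in x₁ with bounded holomorphic coefficients on D_R) in direction d with k-sum f∘π₂. -/

import Mathlib

open Filter
open scoped Topology

noncomputable section

variable {E : Type*} [NormedAddCommGroup E] [NormedSpace ℂ E] [CompleteSpace E]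

/-- A formal power series `Σ a n m x₁^n x₂^m ∈ E[[x₁,x₂]]` (given by its coefficients) is
convergent if `Σ ‖a n m‖ ρ^(n+m) < ∞` for some `ρ > 0`. -/
def PSConvergent (a : ℕ → ℕ → E) : Prop :=
  ∃ ρ : ℝ, 0 < ρ ∧ Summable fun nm : ℕ × ℕ => ‖a nm.1 nm.2‖ * ρ ^ (nm.1 + nm.2)

/-- `s`-Gevrey in the monomial `x₁^p x₂^q` (coefficient characterization). -/
def MonomialGevrey (s : ℝ) (p q : ℕ) (a : ℕ → ℕ → E) : Prop :=
  ∃ C A : ℝ, 0 < C ∧ 0 < A ∧ ∀ n m : ℕ,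
    ‖a n m‖ ≤ C * A ^ (n + m) *
      min ((n.factorial : ℝ) ^ (s / (p : ℝ))) ((m.factorial : ℝ) ^ (s / (q : ℝ)))

/-- The index set `{(m,j) | m < p ∨ j < q}` of the `(p,q)`-coefficient functions. -/
def coeffIndex (p q : ℕ) : Set (ℕ × ℕ) := {mj | mj.1 < p ∨ mj.2 < q}

/-- The `(p,q)`-coefficient function `f_n(x₁,x₂) = Σ_{(m,j) : m<p ∨ j<q} a_{np+m,nq+j} x₁^m x₂^j`. -/
def coeffFn (a : ℕ → ℕ → E) (p q n : ℕ) (x : ℂ × ℂ) : E :=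
  ∑' mj : coeffIndex p q, (x.1 ^ mj.1.1 * x.2 ^ mj.1.2) • a (n * p + mj.1.1) (n * q + mj.1.2)

/-- All the `(p,q)`-coefficient functions of `a` converge and define bounded holomorphic
maps on the polydisk of radius `r`. -/
def CoeffFnGood (a : ℕ → ℕ → E) (p q : ℕ) (r : ℝ) : Prop :=
  ∀ n : ℕ,
    (∀ x : ℂ × ℂ, ‖x.1‖ < r → ‖x.2‖ < r →
      Summable fun mj : coeffIndex p q =>
        (x.1 ^ mj.1.1 * x.2 ^ mj.1.2) • a (n * p + mj.1.1) (n * q + mj.1.2)) ∧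
    DifferentiableOn ℂ (coeffFn a p q n)
      {x : ℂ × ℂ | ‖x.1‖ < r ∧ ‖x.2‖ < r} ∧
    ∃ M : ℝ, ∀ x : ℂ × ℂ, ‖x.1‖ < r → ‖x.2‖ < r → ‖coeffFn a p q n x‖ ≤ M

/-- The monomial sector `Π_{p,q}(a,b,r)`. -/
def MSector (p q : ℕ) (a b r : ℝ) : Set (ℂ × ℂ) :=
  {x | x.1 ≠ 0 ∧ x.2 ≠ 0 ∧ ‖x.1‖ ^ p < r ∧ ‖x.2‖ ^ q < r ∧
    ∃ θ : ℝ, a < θ ∧ θ < b ∧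
      x.1 ^ p * x.2 ^ q = (‖x.1 ^ p * x.2 ^ q‖ : ℂ) * Complex.exp (θ * Complex.I)}

/-- `f` has the series `a` as `s`-Gevrey asymptotic expansion in `x₁^p x₂^q` on the
monomial sector `Π_{p,q}(a₀,b₀,r)`. -/
def HasMAsymp (a : ℕ → ℕ → E) (s : ℝ) (p q : ℕ) (f : ℂ × ℂ → E) (a₀ b₀ r : ℝ) : Prop :=
  ∃ r' : ℝ, 0 < r' ∧ r' ≤ r ∧ CoeffFnGood a p q r' ∧
    ∀ a' b' ρ : ℝ, a₀ < a' → a' < b' → b' < b₀ → 0 < ρ → ρ < r' →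
      ∃ C A : ℝ, 0 < C ∧ 0 < A ∧ ∀ N : ℕ, ∀ x ∈ MSector p q a' b' ρ,
        ‖f x - ∑ n ∈ Finset.range N, (x.1 ^ p * x.2 ^ q) ^ n • coeffFn a p q n x‖ ≤
          C * A ^ N * (N.factorial : ℝ) ^ s * ‖x.1 ^ p * x.2 ^ q‖ ^ N

/-- `f` is a `k`-sum of the series `a` in the monomial `x₁^p x₂^q` in direction `d` :
it is holomorphic on a monomial sector bisected by `d` of opening `> π/k` and has `a`
as `(1/k)`-Gevrey asymptotic expansion in `x₁^p x₂^q` there. -/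
def IsMSum (a : ℕ → ℕ → E) (k : ℝ) (p q : ℕ) (d : ℝ) (f : ℂ × ℂ → E) : Prop :=
  ∃ a₀ b₀ r : ℝ, Real.pi / k < b₀ - a₀ ∧ d = (a₀ + b₀) / 2 ∧ 0 < r ∧
    DifferentiableOn ℂ f (MSector p q a₀ b₀ r) ∧ HasMAsymp a (1 / k) p q f a₀ b₀ r

/-- `k`-summability in the monomial `x₁^p x₂^q` in direction `d`. -/
def MSummableDir (a : ℕ → ℕ → E) (k : ℝ) (p q : ℕ) (d : ℝ) : Prop :=
  ∃ f : ℂ × ℂ → E, IsMSum a k p q d f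

/-- `k`-summability in the monomial `x₁^p x₂^q` : summability in every direction outside
finitely many exceptional directions mod `2π`. -/
def MSummable (a : ℕ → ℕ → E) (k : ℝ) (p q : ℕ) : Prop :=
  ∃ D : Finset ℝ, ∀ d : ℝ, (∀ e ∈ D, ∀ m : ℤ, d ≠ e + 2 * Real.pi * m) →
    MSummableDir a k p q d

/-- Coefficients of `f̂ ∘ π₁`, where `π₁(x₁,x₂) = (x₁x₂, x₂)`. -/
def blowCoeff₁ (a : ℕ → ℕ → E) : ℕ → ℕ → E := fun n m => if n ≤ m then a n (m - n) else 0

/-- Coefficients of `f̂ ∘ π₂`, where `π₂(x₁,x₂) = (x₁, x₁x₂)`. -/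
def blowCoeff₂ (a : ℕ → ℕ → E) : ℕ → ℕ → E := fun n m => if m ≤ n then a (n - m) m else 0

/-- The sector `V(a,b,r)` in one variable. -/
def Sector1 (a b r : ℝ) : Set ℂ :=
  {x | x ≠ 0 ∧ ‖x‖ < r ∧ ∃ θ : ℝ, a < θ ∧ θ < b ∧
    x = (‖x‖ : ℂ) * Complex.exp (θ * Complex.I)}

/-- `f` is a `k`-sum in the variable `x₁`, in direction `d`, of the series
`Σ c n (x₂) x₁ⁿ` with coefficients `c n` holomorphic and bounded on the disk `D_R`. -/
def IsSum1 (c : ℕ → ℂ → E) (R k d : ℝ) (f : ℂ → ℂ → E) : Prop :=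
  ∃ a₀ b₀ r : ℝ, Real.pi / k < b₀ - a₀ ∧ d = (a₀ + b₀) / 2 ∧ 0 < r ∧
    DifferentiableOn ℂ (fun z : ℂ × ℂ => f z.1 z.2) (Sector1 a₀ b₀ r ×ˢ Metric.ball (0 : ℂ) R) ∧
    ∀ a' b' r' : ℝ, a₀ < a' → a' < b' → b' < b₀ → 0 < r' → r' < r →
      ∃ C A : ℝ, 0 < C ∧ 0 < A ∧ ∀ N : ℕ, ∀ x₁ ∈ Sector1 a' b' r', ∀ x₂ ∈ Metric.ball (0 : ℂ) R,
        ‖f x₁ x₂ - ∑ n ∈ Finset.range N, x₁ ^ n • c n x₂‖ ≤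
          C * A ^ N * (N.factorial : ℝ) ^ (1 / k) * ‖x₁‖ ^ N

/-- `k`-summability in the first variable, in direction `d`. -/
def Summable1Dir (c : ℕ → ℂ → E) (R k d : ℝ) : Prop := ∃ f, IsSum1 c R k d f

/-- `k`-summability in the first variable : summability in every direction outside
finitely many exceptional directions mod `2π`. -/
def Summable1 (c : ℕ → ℂ → E) (R k : ℝ) : Prop :=
  ∃ D : Finset ℝ, ∀ d : ℝ, (∀ e ∈ D, ∀ m : ℤ, d ≠ e + 2 * Real.pi * m) →
    Summable1Dir c R k d

/-- The rows `x₂ ↦ Σ_m a n m x₂^m` of a double series. -/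
def rowFn (a : ℕ → ℕ → E) (n : ℕ) (x : ℂ) : E := ∑' m : ℕ, x ^ m • a n m

/-- The columns `x₁ ↦ Σ_n a n m x₁^n` of a double series. -/
def colFn (a : ℕ → ℕ → E) (m : ℕ) (x : ℂ) : E := ∑' n : ℕ, x ^ n • a n m

/-- Each row of `a` converges and defines a bounded (holomorphic) function on `D_r`. -/
def RowsGood (a : ℕ → ℕ → E) (r : ℝ) : Prop :=
  ∀ n : ℕ, (∀ x : ℂ, ‖x‖ < r → Summable fun m : ℕ => x ^ m • a n m) ∧
    ∃ M : ℝ, ∀ x : ℂ, ‖x‖ < r → ‖rowFn a n x‖ ≤ M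

/-- Each column of `a` converges and defines a bounded (holomorphic) function on `D_r`. -/
def ColsGood (a : ℕ → ℕ → E) (r : ℝ) : Prop :=
  ∀ m : ℕ, (∀ x : ℂ, ‖x‖ < r → Summable fun n : ℕ => x ^ n • a n m) ∧
    ∃ M : ℝ, ∀ x : ℂ, ‖x‖ < r → ‖colFn a m x‖ ≤ M

/-- Cauchy estimate: `‖b m‖ ≤ M * (2/R)^m`. -/
lemma aux_cauchy {g : ℂ → E} {b : ℕ → E} {R : ℝ} (hR : 0 < R)
    (hg : DifferentiableOn ℂ g (Metric.ball (0 : ℂ) R))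
    (hbg : ∀ x : ℂ, ‖x‖ < R → HasSum (fun m : ℕ => x ^ m • b m) (g x))
    {M : ℝ} (hM : ∀ x ∈ Metric.ball (0 : ℂ) R, ‖g x‖ ≤ M) :
    ∀ m : ℕ, ‖b m‖ ≤ M * (2 / R) ^ m := by
  set ρ : NNReal := ⟨R / 2, by positivity⟩ with hρ
  have hρR : (ρ : ℝ) = R / 2 := rfl
  have hρpos : (0 : ℝ) < ρ := by rw [hρR]; positivity
  have hball : Metric.closedBall (0 : ℂ) ρ ⊆ Metric.ball (0 : ℂ) R := by
    apply Metric.closedBall_subset_ball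
    rw [hρR]; linarith
  have h1 : HasFPowerSeriesOnBall g (cauchyPowerSeries g 0 ρ) 0 ρ :=
    (hg.mono hball).hasFPowerSeriesOnBall (by exact_mod_cast hρpos)
  set p : FormalMultilinearSeries ℂ ℂ E :=
    fun m => ContinuousMultilinearMap.mkPiRing ℂ (Fin m) (b m) with hp
  have hpnorm : ∀ m, ‖p m‖ = ‖b m‖ := fun m => ContinuousMultilinearMap.norm_mkPiRing _
  -- bound for radius: terms at x₀ = 3R/4 are bounded
  have hx0 : ‖((3 * R / 4 : ℝ) : ℂ)‖ < R := by
    rw [Complex.norm_real, Real.norm_eq_abs, abs_of_pos (by positivity)]; linarith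
  obtain ⟨K, hK⟩ := ((hbg _ hx0).summable.tendsto_atTop_zero.norm).bddAbove_range
  have hKb : ∀ m : ℕ, ‖b m‖ * (3 * R / 4) ^ m ≤ K := by
    intro m
    have := hK (Set.mem_range_self m)
    rw [norm_smul, norm_pow, Complex.norm_real, Real.norm_eq_abs,
      abs_of_pos (by positivity : (0:ℝ) < 3 * R / 4)] at this
    linarith [this]
  have hrad : (ρ : ENNReal) ≤ p.radius := by
    apply p.le_radius_of_bound K
    intro m
    rw [hpnorm, hρR]
    calc ‖b m‖ * (R / 2) ^ m ≤ ‖b m‖ * (3 * R / 4) ^ m :=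
          mul_le_mul_of_nonneg_left (pow_le_pow_left₀ (by positivity) (by linarith) m)
            (norm_nonneg _)
      _ ≤ K := hKb m
  have h2 : HasFPowerSeriesOnBall g p 0 ρ := by
    refine ⟨hrad, by exact_mod_cast hρpos, ?_⟩
    intro y hy
    have hy' : ‖y‖ < R := by
      rw [EMetric.mem_ball, edist_zero_right] at hy
      have h2 : ‖y‖₊ < ρ := by exact_mod_cast hy
      have h3 : ‖y‖ < (ρ : ℝ) := h2
      rw [hρR] at h3; linarith
    simp only [hp, ContinuousMultilinearMap.mkPiRing_apply, Finset.prod_const,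
      Finset.card_univ, Fintype.card_fin, zero_add]
    exact hbg y hy'
  have heq : p = cauchyPowerSeries g 0 ρ :=
    h2.hasFPowerSeriesAt.eq_formalMultilinearSeries h1.hasFPowerSeriesAt
  intro m
  have hMnn : 0 ≤ M := le_trans (norm_nonneg _) (hM 0 (Metric.mem_ball_self hR))
  have hcont : Continuous fun θ : ℝ => ‖g (circleMap 0 (ρ : ℝ) θ)‖ := by
    apply Continuous.norm
    apply hg.continuousOn.comp_continuous (continuous_circleMap _ _)
    intro θ
    rw [Metric.mem_ball, dist_zero_right, norm_circleMap_zero,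
      abs_of_pos hρpos, hρR]
    linarith
  have hint : (∫ θ : ℝ in (0)..2 * Real.pi, ‖g (circleMap 0 (ρ : ℝ) θ)‖) ≤ 2 * Real.pi * M := by
    calc (∫ θ : ℝ in (0)..2 * Real.pi, ‖g (circleMap 0 (ρ : ℝ) θ)‖)
        ≤ ∫ _ : ℝ in (0)..2 * Real.pi, M := by
          apply intervalIntegral.integral_mono_on Real.two_pi_pos.le
            (hcont.intervalIntegrable _ _) (intervalIntegrable_const)
          intro θ _
          apply hM
          rw [Metric.mem_ball, dist_zero_right, norm_circleMap_zero,
            abs_of_pos hρpos, hρR]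
          linarith
      _ = 2 * Real.pi * M := by rw [intervalIntegral.integral_const, smul_eq_mul]; ring
  have hle := norm_cauchyPowerSeries_le g 0 (ρ : ℝ) m
  rw [← heq, hpnorm] at hle
  calc ‖b m‖ ≤ ((2 * Real.pi)⁻¹ * ∫ θ : ℝ in (0)..2 * Real.pi,
          ‖g (circleMap 0 (ρ : ℝ) θ)‖) * |(ρ : ℝ)|⁻¹ ^ m := hle
    _ ≤ ((2 * Real.pi)⁻¹ * (2 * Real.pi * M)) * |(ρ : ℝ)|⁻¹ ^ m :=
        mul_le_mul_of_nonneg_right (mul_le_mul_of_nonneg_left hint (by positivity))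
          (by positivity)
    _ = M * (2 / R) ^ m := by
        rw [abs_of_pos hρpos, hρR]
        rw [inv_mul_cancel_left₀ (by positivity : (2 * Real.pi : ℝ) ≠ 0)]
        rw [inv_div]

/-- Geometric tail estimate for the remainder of a power series. -/
lemma aux_tail {g : ℂ → E} {bn : ℕ → E} {Mn R : ℝ} (hR : 0 < R)
    (hsum : ∀ x : ℂ, ‖x‖ < R → HasSum (fun m : ℕ => x ^ m • bn m) (g x))
    (hbnd : ∀ m, ‖bn m‖ ≤ Mn * (2 / R) ^ m) (z : ℂ) (hz : ‖z‖ < R / 4) (K : ℕ) :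
    ‖g z - ∑ m ∈ Finset.range K, z ^ m • bn m‖ ≤ 2 * Mn * (2 * ‖z‖ / R) ^ K := by
  have hMn : 0 ≤ Mn := le_trans (norm_nonneg _) (by simpa using hbnd 0)
  set q : ℝ := 2 * ‖z‖ / R with hq
  have hq0 : 0 ≤ q := by positivity
  have hq2 : q < 1 / 2 := by
    rw [hq, div_lt_div_iff₀ hR two_pos] at *
    nlinarith [hz]
  have hqform : ∀ m : ℕ, ‖z‖ ^ m * (2 / R) ^ m = q ^ m := by
    intro m
    rw [← mul_pow]
    congr 1
    rw [hq]
    ring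
  have hzR : ‖z‖ < R := by linarith
  have hs := hsum z hzR
  have hnorm_le : ∀ m : ℕ, ‖z ^ (m + K) • bn (m + K)‖ ≤ Mn * q ^ K * q ^ m := by
    intro m
    rw [norm_smul, norm_pow]
    calc ‖z‖ ^ (m + K) * ‖bn (m + K)‖
        ≤ ‖z‖ ^ (m + K) * (Mn * (2 / R) ^ (m + K)) := by
          exact mul_le_mul_of_nonneg_left (hbnd _) (by positivity)
      _ = Mn * (‖z‖ ^ (m + K) * (2 / R) ^ (m + K)) := by ring
      _ = Mn * q ^ (m + K) := by rw [hqform]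
      _ = Mn * q ^ K * q ^ m := by rw [pow_add]; ring
  have hgeo : Summable fun m : ℕ => Mn * q ^ K * q ^ m :=
    (summable_geometric_of_lt_one hq0 (by linarith)).mul_left _
  have hsnorm : Summable fun m : ℕ => ‖z ^ (m + K) • bn (m + K)‖ :=
    Summable.of_nonneg_of_le (fun m => norm_nonneg _) hnorm_le hgeo
  have htail : g z - ∑ m ∈ Finset.range K, z ^ m • bn m = ∑' m : ℕ, z ^ (m + K) • bn (m + K) := by
    have := Summable.sum_add_tsum_nat_add (f := fun m : ℕ => z ^ m • bn m) K hs.summable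
    rw [hs.tsum_eq] at this
    rw [← this]
    abel
  rw [htail]
  calc ‖∑' m : ℕ, z ^ (m + K) • bn (m + K)‖
      ≤ ∑' m : ℕ, ‖z ^ (m + K) • bn (m + K)‖ := norm_tsum_le_tsum_norm hsnorm
    _ ≤ ∑' m : ℕ, Mn * q ^ K * q ^ m := Summable.tsum_le_tsum hnorm_le hsnorm hgeo
    _ = Mn * q ^ K * (1 - q)⁻¹ := by
        rw [tsum_mul_left, tsum_geometric_of_lt_one hq0 (by linarith)]
    _ ≤ Mn * q ^ K * 2 := by
        apply mul_le_mul_of_nonneg_left _ (by positivity)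
        rw [inv_le_comm₀ (by linarith) two_pos]
        linarith
    _ = 2 * Mn * q ^ K := by ring

/-- Reindexing identity for the partial sums of the second blow-up. -/
lemma aux_reindex (b : ℕ → ℕ → E) (x₁ x₂ : ℂ) (N : ℕ) :
    ∑ j ∈ Finset.range N, x₁ ^ j • ∑ m ∈ Finset.range (j + 1), x₂ ^ m • b (j - m) m
      = ∑ n ∈ Finset.range N, x₁ ^ n • ∑ m ∈ Finset.range (N - n), (x₁ * x₂) ^ m • b n m := by
  simp only [Finset.smul_sum, smul_smul]
  rw [Finset.sum_sigma', Finset.sum_sigma']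
  refine Finset.sum_nbij' (fun p => ⟨p.1 - p.2, p.2⟩) (fun p => ⟨p.1 + p.2, p.2⟩) ?_ ?_ ?_ ?_ ?_
  · rintro ⟨j, m⟩ h
    simp only [Finset.mem_sigma, Finset.mem_range] at h ⊢
    omega
  · rintro ⟨n, m⟩ h
    simp only [Finset.mem_sigma, Finset.mem_range] at h ⊢
    omega
  · rintro ⟨j, m⟩ h
    simp only [Finset.mem_sigma, Finset.mem_range] at h
    dsimp only
    have hjm : j - m + m = j := by omega
    rw [hjm]
  · rintro ⟨n, m⟩ h
    dsimp only
    rw [Nat.add_sub_cancel]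
  · rintro ⟨j, m⟩ h
    simp only [Finset.mem_sigma, Finset.mem_range] at h
    dsimp only
    have hjm : j - m + m = j := by omega
    rw [mul_pow, ← mul_assoc, ← pow_add, hjm]

lemma aux_sup {R k : ℝ} (hk : 0 < k)
    {c : ℕ → ℂ → E} {f : ℂ → ℂ → E} {a₀ b₀ r : ℝ}
    (hba : Real.pi / k < b₀ - a₀) (hr : 0 < r)
    (hest : ∀ a' b' r' : ℝ, a₀ < a' → a' < b' → b' < b₀ → 0 < r' → r' < r →
      ∃ C A : ℝ, 0 < C ∧ 0 < A ∧ ∀ N : ℕ, ∀ x₁ ∈ Sector1 a' b' r', ∀ x₂ ∈ Metric.ball (0 : ℂ) R,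
        ‖f x₁ x₂ - ∑ n ∈ Finset.range N, x₁ ^ n • c n x₂‖ ≤
          C * A ^ N * (N.factorial : ℝ) ^ (1 / k) * ‖x₁‖ ^ N) :
    ∃ C₃ A₃ : ℝ, 0 < C₃ ∧ 0 < A₃ ∧ ∀ n : ℕ, ∀ x₂ ∈ Metric.ball (0 : ℂ) R,
      ‖c n x₂‖ ≤ C₃ * A₃ ^ n * (n.factorial : ℝ) ^ (1 / k) := by
  have hpi : 0 < Real.pi / k := div_pos Real.pi_pos hk
  set δ : ℝ := (b₀ - a₀) / 4 with hδdef
  have hδ : 0 < δ := by rw [hδdef]; linarith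
  obtain ⟨C₀, A₀, hC₀, hA₀, hbd⟩ := hest (a₀ + δ) (b₀ - δ) (r / 2)
    (by linarith) (by linarith) (by linarith) (by positivity) (by linarith)
  set θ₀ : ℝ := (a₀ + b₀) / 2 with hθ₀
  set x₁ : ℂ := ((r / 4 : ℝ) : ℂ) * Complex.exp (θ₀ * Complex.I) with hx₁def
  have habs : ‖x₁‖ = r / 4 := by
    rw [hx₁def, norm_mul, Complex.norm_real, Real.norm_eq_abs, Complex.norm_exp,
      abs_of_pos (by positivity : (0:ℝ) < r / 4)]
    simp
  have hx : x₁ ∈ Sector1 (a₀ + δ) (b₀ - δ) (r / 2) := by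
    refine ⟨mul_ne_zero (Complex.ofReal_ne_zero.2 (by positivity)) (Complex.exp_ne_zero _),
      by rw [habs]; linarith, θ₀, by rw [hδdef, hθ₀]; linarith, by rw [hδdef, hθ₀]; linarith, ?_⟩
    rw [habs, hx₁def]
  have h21 : (1 : ℝ) ≤ (2 : ℝ) ^ (1 / k) := by
    rw [show (1 : ℝ) = (2 : ℝ) ^ (0 : ℝ) by simp]
    exact Real.rpow_le_rpow_of_exponent_le one_le_two (by positivity)
  have h2pos : (0 : ℝ) < (2 : ℝ) ^ (1 / k) := Real.rpow_pos_of_pos two_pos _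
  refine ⟨C₀ * (1 + A₀ * (r / 4)), A₀ * (2 : ℝ) ^ (1 / k), by positivity, by positivity, ?_⟩
  intro n x₂ hx₂
  have h1 := hbd n x₁ hx x₂ hx₂
  have h2 := hbd (n + 1) x₁ hx x₂ hx₂
  rw [habs] at h1 h2
  have hkey : (r / 4) ^ n * ‖c n x₂‖ ≤
      C₀ * A₀ ^ n * (n.factorial : ℝ) ^ (1 / k) * (r / 4) ^ n
        + C₀ * A₀ ^ (n + 1) * ((n + 1).factorial : ℝ) ^ (1 / k) * (r / 4) ^ (n + 1) := by
    have hdecomp : x₁ ^ n • c n x₂ =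
        (f x₁ x₂ - ∑ j ∈ Finset.range n, x₁ ^ j • c j x₂)
          - (f x₁ x₂ - ∑ j ∈ Finset.range (n + 1), x₁ ^ j • c j x₂) := by
      rw [Finset.sum_range_succ]; abel
    have := (norm_sub_le _ _).trans (add_le_add h1 h2)
    rw [← hdecomp, norm_smul, norm_pow, habs] at this
    linarith
  have hp : (0 : ℝ) < (r / 4) ^ n := by positivity
  have hcn : ‖c n x₂‖ ≤ C₀ * A₀ ^ n * (n.factorial : ℝ) ^ (1 / k)
      + C₀ * A₀ ^ (n + 1) * ((n + 1).factorial : ℝ) ^ (1 / k) * (r / 4) := by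
    have h' : ‖c n x₂‖ * (r / 4) ^ n ≤
        (C₀ * A₀ ^ n * (n.factorial : ℝ) ^ (1 / k)
          + C₀ * A₀ ^ (n + 1) * ((n + 1).factorial : ℝ) ^ (1 / k) * (r / 4)) * (r / 4) ^ n := by
      rw [add_mul]
      calc ‖c n x₂‖ * (r / 4) ^ n = (r / 4) ^ n * ‖c n x₂‖ := by ring
        _ ≤ _ := hkey
        _ = C₀ * A₀ ^ n * (n.factorial : ℝ) ^ (1 / k) * (r / 4) ^ n
            + C₀ * A₀ ^ (n + 1) * ((n + 1).factorial : ℝ) ^ (1 / k) * (r / 4) * (r / 4) ^ n := by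
          rw [pow_succ]; ring
    exact le_of_mul_le_mul_right h' hp
  have hfact : (((n + 1).factorial : ℕ) : ℝ) ^ (1 / k) ≤
      ((2 : ℝ) ^ (1 / k)) ^ n * (n.factorial : ℝ) ^ (1 / k) := by
    have he : (((n + 1).factorial : ℕ) : ℝ) = ((n : ℝ) + 1) * (n.factorial : ℝ) := by
      rw [Nat.factorial_succ]; push_cast; ring
    rw [he, Real.mul_rpow (by positivity) (by positivity)]
    have h2n : ((n : ℝ) + 1) ≤ (2 : ℝ) ^ n := by
      have := Nat.lt_two_pow_self (n := n)
      exact_mod_cast Nat.succ_le_of_lt this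
    have : ((n : ℝ) + 1) ^ (1 / k) ≤ ((2 : ℝ) ^ n) ^ (1 / k) :=
      Real.rpow_le_rpow (by positivity) h2n (by positivity)
    have h2nk : ((2 : ℝ) ^ n) ^ (1 / k) = ((2 : ℝ) ^ (1 / k)) ^ n := by
      rw [← Real.rpow_natCast 2 n, ← Real.rpow_mul two_pos.le, mul_comm,
        Real.rpow_mul two_pos.le, Real.rpow_natCast]
    rw [h2nk] at this
    exact mul_le_mul_of_nonneg_right this (by positivity)
  have hA03 : A₀ ^ n ≤ (A₀ * (2 : ℝ) ^ (1 / k)) ^ n := by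
    apply pow_le_pow_left₀ hA₀.le
    nlinarith
  calc ‖c n x₂‖ ≤ C₀ * A₀ ^ n * (n.factorial : ℝ) ^ (1 / k)
        + C₀ * A₀ ^ (n + 1) * ((n + 1).factorial : ℝ) ^ (1 / k) * (r / 4) := hcn
    _ ≤ C₀ * (A₀ * (2 : ℝ) ^ (1 / k)) ^ n * (n.factorial : ℝ) ^ (1 / k)
        + C₀ * (A₀ ^ n * A₀) * (((2 : ℝ) ^ (1 / k)) ^ n * (n.factorial : ℝ) ^ (1 / k)) * (r / 4) := by
      apply add_le_add
      · apply mul_le_mul_of_nonneg_right _ (by positivity)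
        exact mul_le_mul_of_nonneg_left hA03 hC₀.le
      · rw [pow_succ]
        apply mul_le_mul_of_nonneg_right _ (by positivity)
        exact mul_le_mul_of_nonneg_left hfact (by positivity)
    _ = C₀ * (A₀ * (2 : ℝ) ^ (1 / k)) ^ n * (n.factorial : ℝ) ^ (1 / k)
        + C₀ * A₀ * (r / 4) * ((A₀ * (2 : ℝ) ^ (1 / k)) ^ n * (n.factorial : ℝ) ^ (1 / k)) := by
      rw [mul_pow]; ring
    _ = C₀ * (1 + A₀ * (r / 4)) * (A₀ * (2 : ℝ) ^ (1 / k)) ^ n * (n.factorial : ℝ) ^ (1 / k) := by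
      ring

/-- **Proposition.** If `f̂ = Σ c n (x₂) x₁ⁿ` (with bounded holomorphic coefficients `c n`
on `D_R`, with Taylor coefficients `b n m`) is `k`-summable in `x₁` in direction `d` with
`k`-sum `f`, then `f̂∘π₁` is `k`-summable in the monomial `x₁x₂` in direction `d` with
`k`-sum `f∘π₁`, and `f̂∘π₂` is `k`-summable in `x₁` in direction `d` with `k`-sum `f∘π₂`. -/
theorem isSum1_blowup
    (R k : ℝ) (hR : 0 < R) (hk : 0 < k) (d : ℝ)
    (c : ℕ → ℂ → E) (b : ℕ → ℕ → E)
    (hc : ∀ n, DifferentiableOn ℂ (c n) (Metric.ball (0 : ℂ) R) ∧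
      ∃ M : ℝ, ∀ x ∈ Metric.ball (0 : ℂ) R, ‖c n x‖ ≤ M)
    (hb : ∀ n, ∀ x : ℂ, ‖x‖ < R → HasSum (fun m : ℕ => x ^ m • b n m) (c n x))
    (f : ℂ → ℂ → E) (hf : IsSum1 c R k d f) :
    IsMSum (blowCoeff₁ b) k 1 1 d (fun x : ℂ × ℂ => f (x.1 * x.2) x.2) ∧
    IsSum1 (fun N x₂ => ∑ m ∈ Finset.range (N + 1), x₂ ^ m • b (N - m) m) R k d
      (fun x₁ x₂ => f x₁ (x₁ * x₂)) := by
  obtain ⟨a₀, b₀, r, hba, hd, hr, hdiff, hest⟩ := hf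
  constructor
  · -- part (a)
    set r₁ : ℝ := min (Real.sqrt r) R with hr₁def
    have hr₁pos : 0 < r₁ := lt_min (Real.sqrt_pos.2 hr) hR
    have hr₁R : r₁ ≤ R := min_le_right _ _
    have hr₁sq : r₁ * r₁ ≤ r := by
      calc r₁ * r₁ ≤ Real.sqrt r * Real.sqrt r :=
            mul_le_mul (min_le_left _ _) (min_le_left _ _) hr₁pos.le (Real.sqrt_nonneg r)
        _ = r := Real.mul_self_sqrt hr.le
    have hsec : ∀ a' b' ρ : ℝ, ρ ≤ r₁ → ∀ x : ℂ × ℂ, x ∈ MSector 1 1 a' b' ρ →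
        x.1 * x.2 ∈ Sector1 a' b' (ρ * ρ) ∧ x.2 ∈ Metric.ball (0 : ℂ) R ∧
          ‖x.2‖ < R := by
      rintro a' b' ρ hρr₁ x ⟨hx1, hx2, hx3, hx4, θ, hθ1, hθ2, hθeq⟩
      rw [pow_one] at hx3 hx4
      rw [pow_one, pow_one] at hθeq
      have habs2R : ‖x.2‖ < R := lt_of_lt_of_le hx4 (hρr₁.trans hr₁R)
      refine ⟨⟨mul_ne_zero hx1 hx2, ?_, θ, hθ1, hθ2, hθeq⟩, ?_, habs2R⟩
      · rw [norm_mul]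
        exact mul_lt_mul'' hx3 hx4 (norm_nonneg _) (norm_nonneg _)
      · rw [Metric.mem_ball, dist_zero_right]; exact habs2R
    set e : ℕ → ↥(coeffIndex 1 1) := fun j => ⟨(0, j), Or.inl one_pos⟩ with hedef
    have he : Function.Injective e := by
      intro j j' h
      have := congrArg (fun y : ↥(coeffIndex 1 1) => (y : ℕ × ℕ).2) h
      simpa [hedef] using this
    have hrange : ∀ y : ↥(coeffIndex 1 1), (y : ℕ × ℕ).1 = 0 → y ∈ Set.range e := by
      rintro ⟨⟨m, j⟩, hy⟩ h
      dsimp only at h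
      subst h
      exact ⟨j, rfl⟩
    have hzero : ∀ (n : ℕ) (x : ℂ × ℂ), ∀ y : ↥(coeffIndex 1 1), y ∉ Set.range e →
        (x.1 ^ (y : ℕ × ℕ).1 * x.2 ^ (y : ℕ × ℕ).2) •
          blowCoeff₁ b (n * 1 + (y : ℕ × ℕ).1) (n * 1 + (y : ℕ × ℕ).2) = 0 := by
      rintro n x ⟨⟨m, j⟩, hy⟩ hne
      have hm : m ≠ 0 := fun h => hne (hrange _ h)
      simp only [coeffIndex, Set.mem_setOf_eq] at hy
      have hj : j = 0 := by omega
      subst hj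
      dsimp only
      have hbc : blowCoeff₁ b (n * 1 + m) (n * 1 + 0) = 0 := by
        simp only [blowCoeff₁, mul_one, add_zero]
        rw [if_neg (by omega)]
      rw [hbc, smul_zero]
    have hcompval : ∀ (n : ℕ) (x : ℂ × ℂ) (j : ℕ),
        (x.1 ^ (e j : ℕ × ℕ).1 * x.2 ^ (e j : ℕ × ℕ).2) •
          blowCoeff₁ b (n * 1 + (e j : ℕ × ℕ).1) (n * 1 + (e j : ℕ × ℕ).2)
          = x.2 ^ j • b n j := by
      intro n x j
      simp [hedef, blowCoeff₁, Nat.le_add_right]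
    have hsummable : ∀ (n : ℕ) (x : ℂ × ℂ), ‖x.2‖ < R →
        Summable fun mj : ↥(coeffIndex 1 1) =>
          (x.1 ^ (mj : ℕ × ℕ).1 * x.2 ^ (mj : ℕ × ℕ).2) •
            blowCoeff₁ b (n * 1 + (mj : ℕ × ℕ).1) (n * 1 + (mj : ℕ × ℕ).2) := by
      intro n x hx2
      refine (Function.Injective.summable_iff he (hzero n x)).mp ?_
      exact Summable.congr (hb n x.2 hx2).summable (fun j => (hcompval n x j).symm)
    have hval : ∀ (n : ℕ) (x : ℂ × ℂ), ‖x.2‖ < R →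
        coeffFn (blowCoeff₁ b) 1 1 n x = c n x.2 := by
      intro n x hx2
      have ht := Function.Injective.tsum_eq (f := fun mj : ↥(coeffIndex 1 1) =>
          (x.1 ^ (mj : ℕ × ℕ).1 * x.2 ^ (mj : ℕ × ℕ).2) •
            blowCoeff₁ b (n * 1 + (mj : ℕ × ℕ).1) (n * 1 + (mj : ℕ × ℕ).2)) he
          (Function.support_subset_iff'.mpr (hzero n x))
      rw [coeffFn, ← ht, tsum_congr (hcompval n x)]
      exact (hb n x.2 hx2).tsum_eq
    have hgood : CoeffFnGood (blowCoeff₁ b) 1 1 r₁ := by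
      intro n
      refine ⟨fun x _ h2 => hsummable n x (h2.trans_le hr₁R), ?_, ?_⟩
      · have hdc : DifferentiableOn ℂ (fun x : ℂ × ℂ => c n x.2)
            {x : ℂ × ℂ | ‖x.1‖ < r₁ ∧ ‖x.2‖ < r₁} := by
          apply DifferentiableOn.comp (hc n).1 differentiable_snd.differentiableOn
          intro x hx
          rw [Metric.mem_ball, dist_zero_right]
          exact hx.2.trans_le hr₁R
        exact hdc.congr (fun x hx => hval n x (hx.2.trans_le hr₁R))
      · obtain ⟨M, hM⟩ := (hc n).2
        refine ⟨M, fun x _ h2 => ?_⟩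
        rw [hval n x (h2.trans_le hr₁R)]
        exact hM _ (by
          rw [Metric.mem_ball, dist_zero_right]
          exact h2.trans_le hr₁R)
    refine ⟨a₀, b₀, r₁, hba, hd, hr₁pos, ?_, r₁, hr₁pos, le_rfl, hgood, ?_⟩
    · have hg : Differentiable ℂ (fun x : ℂ × ℂ => (x.1 * x.2, x.2)) :=
        (differentiable_fst.mul differentiable_snd).prodMk differentiable_snd
      have hmaps : Set.MapsTo (fun x : ℂ × ℂ => (x.1 * x.2, x.2)) (MSector 1 1 a₀ b₀ r₁)
          (Sector1 a₀ b₀ r ×ˢ Metric.ball (0 : ℂ) R) := by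
        intro x hx
        obtain ⟨hs1, hs2, _⟩ := hsec a₀ b₀ r₁ le_rfl x hx
        exact ⟨⟨hs1.1, hs1.2.1.trans_le hr₁sq, hs1.2.2⟩, hs2⟩
      exact DifferentiableOn.comp hdiff hg.differentiableOn hmaps
    · intro a' b' ρ ha' hab hb' hρ hρr₁
      obtain ⟨C, A, hC, hA, hbd⟩ := hest a' b' (ρ * ρ) ha' hab hb' (by positivity)
        (lt_of_lt_of_le (mul_lt_mul'' hρr₁ hρr₁ hρ.le hρ.le) hr₁sq)
      refine ⟨C, A, hC, hA, ?_⟩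
      intro N x hx
      obtain ⟨hs1, hs2, habs2⟩ := hsec a' b' ρ hρr₁.le x hx
      have hmain := hbd N (x.1 * x.2) hs1 x.2 hs2
      have hcoe : ∀ n', coeffFn (blowCoeff₁ b) 1 1 n' x = c n' x.2 := fun n' => hval n' x habs2
      simp only [pow_one, hcoe]
      exact hmain
  · -- part (b)
    obtain ⟨C₃, A₃, hC₃, hA₃, hsup⟩ := aux_sup hk hba hr hest
    have hcb : ∀ n m : ℕ, ‖b n m‖ ≤ (C₃ * A₃ ^ n * (n.factorial : ℝ) ^ (1 / k)) * (2 / R) ^ m :=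
      fun n m => aux_cauchy hR (hc n).1 (hb n) (hsup n) m
    set rb : ℝ := min r (1 / 4) with hrbdef
    have hrbpos : 0 < rb := lt_min hr (by norm_num)
    refine ⟨a₀, b₀, rb, hba, hd, hrbpos, ?_, ?_⟩
    · have hg : Differentiable ℂ (fun z : ℂ × ℂ => (z.1, z.1 * z.2)) :=
        differentiable_fst.prodMk (differentiable_fst.mul differentiable_snd)
      have hmaps : Set.MapsTo (fun z : ℂ × ℂ => (z.1, z.1 * z.2))
          (Sector1 a₀ b₀ rb ×ˢ Metric.ball (0 : ℂ) R)
          (Sector1 a₀ b₀ r ×ˢ Metric.ball (0 : ℂ) R) := by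
        rintro z ⟨hz1, hz2⟩
        have hz2R : ‖z.2‖ < R := by
          rwa [Metric.mem_ball, dist_zero_right] at hz2
        have h14 : ‖z.1‖ < 1 / 4 := hz1.2.1.trans_le (min_le_right _ _)
        refine ⟨⟨hz1.1, hz1.2.1.trans_le (min_le_left _ _), hz1.2.2⟩, ?_⟩
        rw [Metric.mem_ball, dist_zero_right, norm_mul]
        nlinarith [norm_nonneg z.1, norm_nonneg z.2]
      exact DifferentiableOn.comp hdiff hg.differentiableOn hmaps
    · intro a' b' r' ha' hab hb' hr'pos hr'rb
      obtain ⟨C, A, hC, hA, hbd⟩ := hest a' b' r' ha' hab hb' hr'pos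
        (hr'rb.trans_le (min_le_left _ _))
      set A₄ : ℝ := max A₃ 1 with hA₄def
      have hA₄1 : (1 : ℝ) ≤ A₄ := le_max_right _ _
      have hA₄pos : (0 : ℝ) < A₄ := lt_of_lt_of_le one_pos hA₄1
      refine ⟨C + 2 * C₃, max A (4 * A₄), by positivity,
        lt_of_lt_of_le hA (le_max_left _ _), ?_⟩
      intro N x₁ hx₁ x₂ hx₂
      have hx₁r : ‖x₁‖ < r' := hx₁.2.1
      have hx₁4 : ‖x₁‖ < 1 / 4 := hx₁r.trans (hr'rb.trans_le (min_le_right _ _))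
      have hx₂R : ‖x₂‖ < R := by
        rwa [Metric.mem_ball, dist_zero_right] at hx₂
      have habsz : ‖(x₁ * x₂)‖ = ‖x₁‖ * ‖x₂‖ := norm_mul _ _
      have habs1 : (0 : ℝ) ≤ ‖x₁‖ := norm_nonneg _
      have habs2 : (0 : ℝ) ≤ ‖x₂‖ := norm_nonneg _
      have hzR4 : ‖(x₁ * x₂)‖ < R / 4 := by
        rw [habsz]; nlinarith
      have hzball : x₁ * x₂ ∈ Metric.ball (0 : ℂ) R := by
        rw [Metric.mem_ball, dist_zero_right]
        linarith
      have hmain := hbd N x₁ hx₁ (x₁ * x₂) hzball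
      have hNfac : (0 : ℝ) ≤ ((N.factorial : ℝ)) ^ (1 / k) := by positivity
      have hterm : ∀ n ∈ Finset.range N,
          ‖x₁ ^ n • (c n (x₁ * x₂) - ∑ m ∈ Finset.range (N - n), (x₁ * x₂) ^ m • b n m)‖ ≤
            2 * C₃ * A₄ ^ N * (N.factorial : ℝ) ^ (1 / k) * 2 ^ N * ‖x₁‖ ^ N := by
        intro n hn
        rw [Finset.mem_range] at hn
        have htail := aux_tail hR (hb n) (hcb n) (x₁ * x₂) hzR4 (N - n)
        have hq : 2 * ‖(x₁ * x₂)‖ / R ≤ 2 * ‖x₁‖ := by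
          rw [habsz, div_le_iff₀ hR]
          nlinarith
        have h1 : A₃ ^ n ≤ A₄ ^ N :=
          le_trans (pow_le_pow_left₀ hA₃.le (le_max_left _ _) n) (pow_le_pow_right₀ hA₄1 hn.le)
        have h2 : ((n.factorial : ℝ)) ^ (1 / k) ≤ ((N.factorial : ℝ)) ^ (1 / k) :=
          Real.rpow_le_rpow (by positivity) (by exact_mod_cast Nat.factorial_le hn.le)
            (by positivity)
        have h3 : (2 : ℝ) ^ (N - n) ≤ 2 ^ N := pow_le_pow_right₀ one_le_two (Nat.sub_le _ _)
        calc ‖x₁ ^ n • (c n (x₁ * x₂) - ∑ m ∈ Finset.range (N - n), (x₁ * x₂) ^ m • b n m)‖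
            = ‖x₁‖ ^ n *
                ‖c n (x₁ * x₂) - ∑ m ∈ Finset.range (N - n), (x₁ * x₂) ^ m • b n m‖ := by
              rw [norm_smul, norm_pow]
          _ ≤ ‖x₁‖ ^ n * (2 * (C₃ * A₃ ^ n * (n.factorial : ℝ) ^ (1 / k)) *
                (2 * ‖(x₁ * x₂)‖ / R) ^ (N - n)) :=
              mul_le_mul_of_nonneg_left htail (by positivity)
          _ ≤ ‖x₁‖ ^ n * (2 * (C₃ * A₃ ^ n * (n.factorial : ℝ) ^ (1 / k)) *
                (2 * ‖x₁‖) ^ (N - n)) := by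
              apply mul_le_mul_of_nonneg_left _ (by positivity)
              apply mul_le_mul_of_nonneg_left _ (by positivity)
              exact pow_le_pow_left₀ (by positivity) hq _
          _ = 2 * C₃ * A₃ ^ n * (n.factorial : ℝ) ^ (1 / k) * 2 ^ (N - n) *
                (‖x₁‖ ^ n * ‖x₁‖ ^ (N - n)) := by
              rw [mul_pow]; ring
          _ = 2 * C₃ * A₃ ^ n * (n.factorial : ℝ) ^ (1 / k) * 2 ^ (N - n) *
                ‖x₁‖ ^ N := by
              rw [← pow_add, Nat.add_sub_cancel' hn.le]
          _ ≤ 2 * C₃ * A₄ ^ N * (N.factorial : ℝ) ^ (1 / k) * 2 ^ N * ‖x₁‖ ^ N := by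
              have s1 : 2 * C₃ * A₃ ^ n ≤ 2 * C₃ * A₄ ^ N :=
                mul_le_mul_of_nonneg_left h1 (by positivity)
              have s2 : 2 * C₃ * A₃ ^ n * (n.factorial : ℝ) ^ (1 / k) ≤
                  2 * C₃ * A₄ ^ N * (N.factorial : ℝ) ^ (1 / k) :=
                mul_le_mul s1 h2 (by positivity) (by positivity)
              have s3 : 2 * C₃ * A₃ ^ n * (n.factorial : ℝ) ^ (1 / k) * 2 ^ (N - n) ≤
                  2 * C₃ * A₄ ^ N * (N.factorial : ℝ) ^ (1 / k) * 2 ^ N :=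
                mul_le_mul s2 h3 (by positivity) (by positivity)
              exact mul_le_mul_of_nonneg_right s3 (by positivity)
      have hsum2 : ‖∑ n ∈ Finset.range N, x₁ ^ n •
            (c n (x₁ * x₂) - ∑ m ∈ Finset.range (N - n), (x₁ * x₂) ^ m • b n m)‖ ≤
          2 * C₃ * (4 * A₄) ^ N * (N.factorial : ℝ) ^ (1 / k) * ‖x₁‖ ^ N := by
        calc ‖∑ n ∈ Finset.range N, x₁ ^ n •
              (c n (x₁ * x₂) - ∑ m ∈ Finset.range (N - n), (x₁ * x₂) ^ m • b n m)‖
            ≤ ∑ n ∈ Finset.range N, ‖x₁ ^ n •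
              (c n (x₁ * x₂) - ∑ m ∈ Finset.range (N - n), (x₁ * x₂) ^ m • b n m)‖ :=
              norm_sum_le _ _
          _ ≤ ∑ _n ∈ Finset.range N,
              2 * C₃ * A₄ ^ N * (N.factorial : ℝ) ^ (1 / k) * 2 ^ N * ‖x₁‖ ^ N :=
              Finset.sum_le_sum hterm
          _ = (N : ℝ) * (2 * C₃ * A₄ ^ N * (N.factorial : ℝ) ^ (1 / k) * 2 ^ N *
                ‖x₁‖ ^ N) := by
              rw [Finset.sum_const, Finset.card_range, nsmul_eq_mul]
          _ ≤ (2 : ℝ) ^ N * (2 * C₃ * A₄ ^ N * (N.factorial : ℝ) ^ (1 / k) * 2 ^ N *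
                ‖x₁‖ ^ N) := by
              apply mul_le_mul_of_nonneg_right _ (by positivity)
              exact_mod_cast (Nat.lt_two_pow_self (n := N)).le
          _ = 2 * C₃ * (4 * A₄) ^ N * (N.factorial : ℝ) ^ (1 / k) * ‖x₁‖ ^ N := by
              have h4 : (4 : ℝ) ^ N = 2 ^ N * 2 ^ N := by rw [← mul_pow]; norm_num
              rw [mul_pow, h4]; ring
      have hdec : f x₁ (x₁ * x₂) - ∑ n ∈ Finset.range N, x₁ ^ n •
            ∑ m ∈ Finset.range (N - n), (x₁ * x₂) ^ m • b n m
          = (f x₁ (x₁ * x₂) - ∑ n ∈ Finset.range N, x₁ ^ n • c n (x₁ * x₂))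
            + ∑ n ∈ Finset.range N, x₁ ^ n •
                (c n (x₁ * x₂) - ∑ m ∈ Finset.range (N - n), (x₁ * x₂) ^ m • b n m) := by
        simp only [smul_sub, Finset.sum_sub_distrib]
        abel
      simp only
      rw [aux_reindex b x₁ x₂ N, hdec]
      calc ‖(f x₁ (x₁ * x₂) - ∑ n ∈ Finset.range N, x₁ ^ n • c n (x₁ * x₂))
            + ∑ n ∈ Finset.range N, x₁ ^ n •
                (c n (x₁ * x₂) - ∑ m ∈ Finset.range (N - n), (x₁ * x₂) ^ m • b n m)‖
          ≤ ‖f x₁ (x₁ * x₂) - ∑ n ∈ Finset.range N, x₁ ^ n • c n (x₁ * x₂)‖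
            + ‖∑ n ∈ Finset.range N, x₁ ^ n •
                (c n (x₁ * x₂) - ∑ m ∈ Finset.range (N - n), (x₁ * x₂) ^ m • b n m)‖ :=
            norm_add_le _ _
        _ ≤ C * A ^ N * (N.factorial : ℝ) ^ (1 / k) * ‖x₁‖ ^ N
            + 2 * C₃ * (4 * A₄) ^ N * (N.factorial : ℝ) ^ (1 / k) * ‖x₁‖ ^ N :=
            add_le_add hmain hsum2
        _ ≤ C * (max A (4 * A₄)) ^ N * (N.factorial : ℝ) ^ (1 / k) * ‖x₁‖ ^ N
            + 2 * C₃ * (max A (4 * A₄)) ^ N * (N.factorial : ℝ) ^ (1 / k) *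
              ‖x₁‖ ^ N := by
            have h1 : A ^ N ≤ (max A (4 * A₄)) ^ N :=
              pow_le_pow_left₀ hA.le (le_max_left _ _) N
            have h2 : (4 * A₄) ^ N ≤ (max A (4 * A₄)) ^ N :=
              pow_le_pow_left₀ (by positivity) (le_max_right _ _) N
            have e1 : C * A ^ N * (N.factorial : ℝ) ^ (1 / k) * ‖x₁‖ ^ N ≤
                C * (max A (4 * A₄)) ^ N * (N.factorial : ℝ) ^ (1 / k) * ‖x₁‖ ^ N :=
              mul_le_mul_of_nonneg_right (mul_le_mul_of_nonneg_right
                (mul_le_mul_of_nonneg_left h1 hC.le) hNfac) (pow_nonneg habs1 N)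
            have e2 : 2 * C₃ * (4 * A₄) ^ N * (N.factorial : ℝ) ^ (1 / k) *
                ‖x₁‖ ^ N ≤
                2 * C₃ * (max A (4 * A₄)) ^ N * (N.factorial : ℝ) ^ (1 / k) *
                  ‖x₁‖ ^ N :=
              mul_le_mul_of_nonneg_right (mul_le_mul_of_nonneg_right
                (mul_le_mul_of_nonneg_left h2 (by positivity)) hNfac) (pow_nonneg habs1 N)
            exact add_le_add e1 e2
        _ = (C + 2 * C₃) * (max A (4 * A₄)) ^ N * (N.factorial : ℝ) ^ (1 / k) *
              ‖x₁‖ ^ N := by ring
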